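/- Let S be a nonabelian simple subnormal subgroup of a finite group G, let U be a π-Hall subgroup of S, let g₁,…,gₙ be a right transversal of N_G(S) in G, and let V = ⟨U^{g₁},…,U^{gₙ}⟩. Then V is a π-Hall subgroup of the normal closure ⟨S^G⟩ of S in G. -/

import Mathlib

def IsPiNumber (π : Set ℕ) (n : ℕ) : Prop := ∀ p : ℕ, p.Prime → p ∣ n → p ∈ π

def IsHallSubgroup {G : Type*} [Group G] (π : Set ℕ) (H : Subgroup G) : Prop :=
  IsPiNumber π (Nat.card H) ∧ ∀ p : ℕ, p.Prime → p ∣ H.index → p ∉ π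

def conjSub {G : Type*} [Group G] (g : G) (H : Subgroup G) : Subgroup G :=
  H.map (MulAut.conj g).toMonoidHom

/-- `H` is subnormal in `G`: there is a chain from `H` to `⊤` with each term
normal in the next. -/
def IsSubnormalIn {G : Type*} [Group G] (H : Subgroup G) : Prop :=
  ∃ n : ℕ, ∃ c : Fin (n + 1) → Subgroup G, c 0 = H ∧ c (Fin.last n) = ⊤ ∧
    ∀ i : Fin n, c i.castSucc ≤ c i.succ ∧ ((c i.castSucc).subgroupOf (c i.succ)).Normal

namespace HallNC

variable {G : Type*} [Group G]

/-- `A` is normal in `B` (ambient lattice version). -/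
def RelNormal (A B : Subgroup G) : Prop :=
  A ≤ B ∧ ∀ b ∈ B, ∀ a ∈ A, b * a * b⁻¹ ∈ A

/-- `A` is subnormal in `B` with a chain of length `d`. -/
def Subn : ℕ → Subgroup G → Subgroup G → Prop
  | 0, A, B => A = B
  | (d+1), A, B => ∃ M : Subgroup G, Subn d A M ∧ RelNormal M B

lemma subn_le : ∀ {d : ℕ} {A B : Subgroup G}, Subn d A B → A ≤ B
  | 0, _, _, h => le_of_eq h
  | (d+1), _, _, ⟨_, h1, h2⟩ => (subn_le h1).trans h2.1

lemma relNormal_of_subgroupOf {A B : Subgroup G} (hle : A ≤ B)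
    (h : (A.subgroupOf B).Normal) : RelNormal A B := by
  refine ⟨hle, fun b hb a ha => ?_⟩
  have := h.conj_mem ⟨a, hle ha⟩ (by simpa [Subgroup.mem_subgroupOf] using ha) ⟨b, hb⟩
  simpa [Subgroup.mem_subgroupOf] using this

lemma subgroupOf_normal_of_relNormal {A B : Subgroup G} (h : RelNormal A B) :
    (A.subgroupOf B).Normal := by
  constructor
  rintro ⟨a, haB⟩ ha ⟨b, hb⟩
  simp only [Subgroup.mem_subgroupOf] at ha ⊢
  exact h.2 b hb a ha

lemma subn_of_chain : ∀ (n : ℕ) (c : Fin (n+1) → Subgroup G),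
    (∀ i : Fin n, RelNormal (c i.castSucc) (c i.succ)) → Subn n (c 0) (c (Fin.last n))
  | 0, _, _ => rfl
  | (n+1), c, h => by
      refine ⟨c (Fin.last n).castSucc, ?_, ?_⟩
      · have := subn_of_chain n (fun i => c i.castSucc) (fun i => by
          have := h i.castSucc
          rwa [Fin.succ_castSucc] at this)
        simpa using this
      · have := h (Fin.last n)
        rwa [Fin.succ_last] at this

lemma mem_conjSub {g y : G} {H : Subgroup G} : y ∈ conjSub g H ↔ g⁻¹ * y * g ∈ H := by
  simp only [conjSub, Subgroup.mem_map, MulEquiv.coe_toMonoidHom, MulAut.conj_apply]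
  constructor
  · rintro ⟨x, hx, rfl⟩; group; simpa using hx
  · intro hx; exact ⟨g⁻¹ * y * g, hx, by group⟩

lemma conjSub_mono (g : G) {A B : Subgroup G} (h : A ≤ B) : conjSub g A ≤ conjSub g B :=
  Subgroup.map_mono h

lemma conjSub_top (g : G) : conjSub g (⊤ : Subgroup G) = ⊤ := by
  ext x; simp [mem_conjSub]

lemma conjSub_conjSub (a b : G) (H : Subgroup G) :
    conjSub a (conjSub b H) = conjSub (a * b) H := by
  ext x; simp only [mem_conjSub, mul_inv_rev]; group

lemma conjSub_eq_self {a : G} {H : Subgroup G} (ha : a ∈ Subgroup.normalizer (H : Set G)) :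
    conjSub a H = H := by
  ext x
  rw [mem_conjSub]
  rw [Subgroup.mem_normalizer_iff''] at ha
  exact (ha x).symm

lemma relNormal_conjSub (g : G) {A B : Subgroup G} (h : RelNormal A B) :
    RelNormal (conjSub g A) (conjSub g B) := by
  refine ⟨conjSub_mono g h.1, fun b hb a ha => ?_⟩
  rw [mem_conjSub] at hb ha ⊢
  have := h.2 _ hb _ ha
  convert this using 1; group

lemma subn_conjSub (g : G) : ∀ {d : ℕ} {A B : Subgroup G}, Subn d A B →
    Subn d (conjSub g A) (conjSub g B)
  | 0, _, _, h => by rw [Subn] at h ⊢; rw [h]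
  | (d+1), _, _, ⟨M, h1, h2⟩ => ⟨conjSub g M, subn_conjSub g h1, relNormal_conjSub g h2⟩

/-- Simple and nonabelian, phrased for a subgroup. -/
def SimpleNA (A : Subgroup G) : Prop :=
  IsSimpleGroup ↥A ∧ ∃ a ∈ A, ∃ b ∈ A, a * b ≠ b * a

lemma simpleNA_ne_bot {A : Subgroup G} (h : SimpleNA A) : A ≠ ⊥ := by
  rintro rfl
  obtain ⟨a, ha, b, hb, hab⟩ := h.2
  simp only [Subgroup.mem_bot] at ha hb
  subst ha; subst hb; simp at hab

lemma simpleNA_conjSub (g : G) {A : Subgroup G} (h : SimpleNA A) : SimpleNA (conjSub g A) := by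
  obtain ⟨hs, a, ha, b, hb, hab⟩ := h
  constructor
  · have e := A.equivMapOfInjective (MulAut.conj g).toMonoidHom (MulAut.conj g).injective
    haveI : Nontrivial ↥A := hs.toNontrivial
    haveI : Nontrivial ↥(conjSub g A) := e.symm.toEquiv.nontrivial
    exact IsSimpleGroup.isSimpleGroup_of_surjective e.toMonoidHom e.surjective
  · refine ⟨g * a * g⁻¹, mem_conjSub.mpr (by group; simpa using ha),
      g * b * g⁻¹, mem_conjSub.mpr (by group; simpa using hb), fun hc => hab ?_⟩
    have : g * (a * b) * g⁻¹ = g * (b * a) * g⁻¹ := by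
      calc g * (a * b) * g⁻¹ = (g * a * g⁻¹) * (g * b * g⁻¹) := by group
      _ = (g * b * g⁻¹) * (g * a * g⁻¹) := hc
      _ = g * (b * a) * g⁻¹ := by group
    have := mul_left_cancel ((mul_right_cancel this))
    exact this

lemma eq_one_of_forall_commute {A : Subgroup G} (h : SimpleNA A) {a : G} (ha : a ∈ A)
    (hc : ∀ b ∈ A, a * b = b * a) : a = 1 := by
  obtain ⟨hs, x, hx, y, hy, hxy⟩ := h
  haveI := hs
  rcases (Subgroup.Normal.eq_bot_or_eq_top (H := Subgroup.center ↥A) inferInstance) with hbot | htop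
  · have : (⟨a, ha⟩ : ↥A) ∈ Subgroup.center ↥A := by
      rw [Subgroup.mem_center_iff]
      rintro ⟨b, hb⟩
      exact Subtype.ext (hc b hb).symm
    rw [hbot, Subgroup.mem_bot] at this
    exact congrArg Subtype.val this
  · exfalso
    have hx' : (⟨x, hx⟩ : ↥A) ∈ Subgroup.center ↥A := htop ▸ Subgroup.mem_top _
    rw [Subgroup.mem_center_iff] at hx'
    exact hxy (congrArg Subtype.val (hx' ⟨y, hy⟩)).symm

open scoped commutatorElement in
lemma commutator_self_of_simpleNA {A : Subgroup G} (h : SimpleNA A) : ⁅A, A⁆ = A := by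
  obtain ⟨hs, x, hx, y, hy, hxy⟩ := h
  haveI := hs
  have key : Subgroup.map A.subtype ⁅(⊤ : Subgroup ↥A), ⊤⁆ = ⁅A, A⁆ := by
    rw [Subgroup.map_commutator, ← MonoidHom.range_eq_map, Subgroup.range_subtype]
  rcases (Subgroup.Normal.eq_bot_or_eq_top (H := ⁅(⊤ : Subgroup ↥A), (⊤ : Subgroup ↥A)⁆) inferInstance) with hbot | htop
  · exfalso
    have : (⁅(⟨x, hx⟩ : ↥A), (⟨y, hy⟩ : ↥A)⁆ : ↥A) ∈ ⁅(⊤ : Subgroup ↥A), ⊤⁆ :=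
      Subgroup.commutator_mem_commutator (Subgroup.mem_top _) (Subgroup.mem_top _)
    rw [hbot, Subgroup.mem_bot, commutatorElement_eq_one_iff_mul_comm] at this
    exact hxy (congrArg Subtype.val this)
  · rw [← key, htop, ← MonoidHom.range_eq_map, Subgroup.range_subtype]

lemma subn_inf {H : Subgroup G} : ∀ {d : ℕ} {A K : Subgroup G}, Subn d A K → A ≤ H →
    Subn d A (K ⊓ H)
  | 0, A, K, h, hA => by
      rw [Subn] at h ⊢; subst h; exact (inf_eq_left.mpr hA).symm
  | (d+1), A, K, ⟨M, hM, hMK⟩, hA => by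
      refine ⟨M ⊓ H, subn_inf hM hA, inf_le_inf_right H hMK.1, ?_⟩
      rintro b ⟨hbK, hbH⟩ a ⟨haM, haH⟩
      exact ⟨hMK.2 b hbK a haM, Subgroup.mul_mem _ (Subgroup.mul_mem _ hbH haH) (inv_mem hbH)⟩

lemma subn_eq_bot_or_eq_of_simple : ∀ {e : ℕ} {B A : Subgroup G}, Subn e B A →
    IsSimpleGroup ↥A → B = ⊥ ∨ B = A
  | 0, B, A, h, _ => Or.inr h
  | (e+1), B, A, ⟨M, hBM, hMA⟩, hs => by
      haveI := hs
      rcases Subgroup.Normal.eq_bot_or_eq_top (subgroupOf_normal_of_relNormal hMA) with hb | ht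
      · rw [Subgroup.subgroupOf_eq_bot] at hb
        left
        exact le_bot_iff.mp ((subn_le hBM).trans (hb.eq_bot_of_le hMA.1).le)
      · rw [Subgroup.subgroupOf_eq_top] at ht
        have : M = A := le_antisymm hMA.1 ht
        subst this
        exact subn_eq_bot_or_eq_of_simple hBM hs

/-- Wielandt: a subnormal simple nonabelian subgroup and a normal subgroup either
contain one another or commute. -/
lemma wielandt_A : ∀ (d : ℕ) (S K N : Subgroup G), Subn d S K → SimpleNA S →
    RelNormal N K → S ≤ N ∨ ⁅S, N⁆ = ⊥
  | 0, S, K, N, hd, hS, hN => by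
      rw [Subn] at hd; subst hd
      haveI := hS.1
      rcases Subgroup.Normal.eq_bot_or_eq_top (subgroupOf_normal_of_relNormal hN) with hb | ht
      · rw [Subgroup.subgroupOf_eq_bot] at hb
        right
        rw [hb.eq_bot_of_le hN.1, Subgroup.commutator_bot_right]
      · rw [Subgroup.subgroupOf_eq_top] at ht
        exact Or.inl ht
  | (d+1), S, K, N, ⟨M, hSM, hMK⟩, hS, hN => by
      have hSK : S ≤ K := (subn_le hSM).trans hMK.1
      have hNM : RelNormal (N ⊓ M) M := by
        refine ⟨inf_le_right, ?_⟩
        rintro m hm a ⟨haN, haM⟩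
        exact ⟨hN.2 m (hMK.1 hm) a haN, Subgroup.mul_mem _ (Subgroup.mul_mem _ hm haM) (inv_mem hm)⟩
      rcases wielandt_A d S M (N ⊓ M) hSM hS hNM with h | h
      · exact Or.inl (h.trans inf_le_left)
      · right
        have hSNle : ⁅S, N⁆ ≤ N ⊓ M := by
          rw [Subgroup.commutator_le]
          intro s hs n hn
          refine ⟨?_, ?_⟩
          · have h1 : s * n * s⁻¹ ∈ N := hN.2 s (hSK hs) n hn
            simpa [commutatorElement_def, mul_assoc] using Subgroup.mul_mem _ h1 (inv_mem hn)
          · have h2 : n * s⁻¹ * n⁻¹ ∈ M := hMK.2 n (hN.1 hn) s⁻¹ (inv_mem (subn_le hSM hs))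
            have := Subgroup.mul_mem _ (subn_le hSM hs) h2
            simpa [commutatorElement_def, mul_assoc] using this
        have h1 : ⁅⁅S, N⁆, S⁆ = ⊥ :=
          le_bot_iff.mp (le_of_le_of_eq (Subgroup.commutator_mono hSNle le_rfl)
            (Subgroup.commutator_comm (N ⊓ M) S ▸ h))
        have h2 : ⁅⁅N, S⁆, S⁆ = ⊥ := by rwa [Subgroup.commutator_comm N S]
        have h3 : ⁅⁅S, S⁆, N⁆ = ⊥ := Subgroup.commutator_commutator_eq_bot_of_rotate h1 h2
        rwa [commutator_self_of_simpleNA hS] at h3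

/-- Wielandt: two distinct subnormal simple nonabelian subgroups commute. -/
lemma wielandt_B : ∀ (d : ℕ) (K S T : Subgroup G), (∃ e, Subn e S K) → Subn d T K →
    SimpleNA S → SimpleNA T → S ≠ T → ⁅S, T⁆ = ⊥
  | 0, K, S, T, ⟨e, hSK⟩, hTK, hS, hT, hST => by
      rw [Subn] at hTK; subst hTK
      rcases subn_eq_bot_or_eq_of_simple hSK hT.1 with h | h
      · exact absurd h (simpleNA_ne_bot hS)
      · exact absurd h hST
  | (d+1), K, S, T, ⟨e, hSK⟩, ⟨M, hTM, hMK⟩, hS, hT, hST => by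
      rcases wielandt_A e S K M hSK hS hMK with h | h
      · have hSM : Subn e S M := by
          have := subn_inf (H := M) hSK h
          rwa [inf_eq_right.mpr hMK.1] at this
        exact wielandt_B d M S T ⟨e, hSM⟩ hTM hS hT hST
      · exact le_bot_iff.mp ((Subgroup.commutator_mono le_rfl (subn_le hTM)).trans h.le)

lemma conjSub_eq_self_iff {a : G} {H : Subgroup G} :
    conjSub a H = H ↔ a ∈ Subgroup.normalizer (H : Set G) := by
  constructor
  · intro h
    rw [Subgroup.mem_normalizer_iff'']
    intro x
    nth_rewrite 1 [← h]
    rw [mem_conjSub]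
  · exact conjSub_eq_self

lemma card_conjSub (x : G) (H : Subgroup G) : Nat.card ↥(conjSub x H) = Nat.card ↥H :=
  (Nat.card_congr (H.equivMapOfInjective (MulAut.conj x).toMonoidHom
    (MulAut.conj x).injective).toEquiv).symm

lemma card_iSup_of_comm_indep {n : ℕ} {H : Fin n → Subgroup G}
    (hcomm : Pairwise fun i j => ∀ x y : G, x ∈ H i → y ∈ H j → Commute x y)
    (hind : iSupIndep H) : Nat.card ↥(⨆ i, H i) = ∏ i, Nat.card ↥(H i) := by
  rw [← Subgroup.noncommPiCoprod_range (hcomm := hcomm),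
    ← Nat.card_congr (MonoidHom.ofInjective
      (Subgroup.injective_noncommPiCoprod_of_iSupIndep hind)).toEquiv, Nat.card_pi]

end HallNC

open HallNC in
/-- If `S` is a nonabelian simple subnormal subgroup of `G`, `U` a `π`-Hall subgroup of
`S`, `g₁, …, gₙ` a right transversal of `N_G(S)` in `G`, and `V = ⟨U^{g₁}, …, U^{gₙ}⟩`,
then `V` is a `π`-Hall subgroup of the normal closure `⟨S^G⟩`. -/
theorem hall_of_normal_closure {G : Type*} [Group G] [Finite G] (π : Set ℕ)
    (S U : Subgroup G) (hsub : IsSubnormalIn S) (hsimple : IsSimpleGroup S)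
    (hnonab : ¬ ∀ a b : S, a * b = b * a)
    (hUS : U ≤ S) (hU : IsHallSubgroup π (U.subgroupOf S))
    (n : ℕ) (g : Fin n → G)
    (htrans : ∀ x : G, ∃! i : Fin n, x * (g i)⁻¹ ∈ Subgroup.normalizer (S : Set G)) :
    IsHallSubgroup π
      ((⨆ i : Fin n, conjSub (g i)⁻¹ U).subgroupOf (Subgroup.normalClosure (S : Set G))) := by
  classical
  obtain ⟨a0, b0, hab0⟩ : ∃ a b : S, a * b ≠ b * a := by
    by_contra h; push_neg at h; exact hnonab h
  have hSNA : SimpleNA S := ⟨hsimple, a0, a0.2, b0, b0.2, fun h => hab0 (Subtype.ext h)⟩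
  set Uc : Fin n → Subgroup G := fun i => conjSub (g i)⁻¹ U with hUcdef
  set L := Subgroup.normalClosure (S : Set G) with hLdef
  set Sc : Fin n → Subgroup G := fun i => conjSub (g i)⁻¹ S with hScdef
  have hScNA : ∀ i, SimpleNA (Sc i) := fun i => simpleNA_conjSub _ hSNA
  have hSsubn : ∃ d, Subn d S ⊤ := by
    obtain ⟨m, c, hc0, hclast, hstep⟩ := hsub
    refine ⟨m, ?_⟩
    have := subn_of_chain m c (fun i => relNormal_of_subgroupOf (hstep i).1 (hstep i).2)
    rwa [hc0, hclast] at this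
  have hScsubn : ∀ i, ∃ d, Subn d (Sc i) ⊤ := by
    intro i
    obtain ⟨d, hd⟩ := hSsubn
    exact ⟨d, by simpa [conjSub_top] using subn_conjSub ((g i)⁻¹) hd⟩
  have hconj_mem : ∀ x : G, ∃ j, conjSub x S = Sc j := by
    intro x
    obtain ⟨j, hj, -⟩ := htrans x⁻¹
    have hj' : g j * x ∈ Subgroup.normalizer (S : Set G) := by
      have := inv_mem hj
      simpa [mul_inv_rev] using this
    refine ⟨j, ?_⟩
    have h2 : conjSub ((g j)⁻¹) (conjSub (g j * x) S) = conjSub x S := by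
      rw [conjSub_conjSub]; congr 1; group
    rw [← h2, conjSub_eq_self hj']
  have hScne : ∀ i j, i ≠ j → Sc i ≠ Sc j := by
    intro i j hij heq
    have h1 : conjSub (g j * (g i)⁻¹) S = S := by
      have h2 := congrArg (conjSub (g j)) heq
      simp only [hScdef, conjSub_conjSub] at h2
      rw [mul_inv_cancel] at h2
      rw [h2, conjSub_eq_self (one_mem _)]
    have h3 : g j * (g i)⁻¹ ∈ Subgroup.normalizer (S : Set G) := conjSub_eq_self_iff.mp h1
    obtain ⟨i', _, huniq⟩ := htrans (g j)
    have hii : i = i' := huniq i h3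
    have hjj : j = i' := huniq j (by simpa using one_mem (Subgroup.normalizer (S : Set G)))
    exact hij (hii.trans hjj.symm)
  have hcomm : Pairwise fun i j => ∀ x y : G, x ∈ Sc i → y ∈ Sc j → Commute x y := by
    intro i j hij
    obtain ⟨d, hd⟩ := hScsubn j
    have hbot := wielandt_B d ⊤ (Sc i) (Sc j) (hScsubn i) hd (hScNA i) (hScNA j) (hScne i j hij)
    intro x y hx hy
    have hm := Subgroup.commutator_le.mp hbot.le x hx y hy
    rw [Subgroup.mem_bot] at hm
    exact commutatorElement_eq_one_iff_commute.mp hm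
  have hScL : ∀ i, Sc i ≤ L := by
    intro i x hx
    rw [mem_conjSub] at hx
    have hs : g i * x * (g i)⁻¹ ∈ S := by simpa using hx
    have h1 : g i * x * (g i)⁻¹ ∈ L := Subgroup.le_normalClosure hs
    have h2 := Subgroup.normalClosure_normal.conj_mem _ h1 (g i)⁻¹
    have h3 : (g i)⁻¹ * (g i * x * (g i)⁻¹) * ((g i)⁻¹)⁻¹ = x := by group
    rwa [h3] at h2
  have hWnormal : (⨆ i, Sc i).Normal := by
    constructor
    intro w hw x
    have hle : conjSub x (⨆ i, Sc i) ≤ ⨆ i, Sc i := by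
      rw [show conjSub x (⨆ i, Sc i) = ⨆ i, conjSub x (Sc i) from Subgroup.map_iSup _ _]
      refine iSup_le fun i => ?_
      have h4 : conjSub x (Sc i) = conjSub (x * (g i)⁻¹) S := conjSub_conjSub _ _ _
      obtain ⟨j, hj⟩ := hconj_mem (x * (g i)⁻¹)
      rw [h4, hj]
      exact le_iSup Sc j
    apply hle
    rw [mem_conjSub]
    have h5 : x⁻¹ * (x * w * x⁻¹) * x = w := by group
    rwa [h5]
  have hSle : S ≤ ⨆ i, Sc i := by
    obtain ⟨j, hj⟩ := hconj_mem 1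
    rw [← conjSub_eq_self (one_mem (Subgroup.normalizer (S : Set G))), hj]
    exact le_iSup Sc j
  have hLeq : L = ⨆ i, Sc i := by
    apply le_antisymm
    · haveI := hWnormal
      exact Subgroup.normalClosure_le_normal hSle
    · exact iSup_le hScL
  have hcent : ∀ i, (⨆ j, ⨆ _ : j ≠ i, Sc j) ≤ Subgroup.centralizer (Sc i : Set G) := by
    intro i
    refine iSup_le fun j => iSup_le fun hj => ?_
    intro y hy
    rw [Subgroup.mem_centralizer_iff]
    intro z hz
    exact (hcomm hj y z hy hz).symm
  have hind : iSupIndep Sc := by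
    intro i
    rw [Subgroup.disjoint_def]
    intro x hx hx'
    have hxc := hcent i hx'
    rw [Subgroup.mem_centralizer_iff] at hxc
    exact eq_one_of_forall_commute (hScNA i) hx (fun b hb => (hxc b hb).symm)
  have hUcS : ∀ i, Uc i ≤ Sc i := fun i => conjSub_mono _ hUS
  have hcommU : Pairwise fun i j => ∀ x y : G, x ∈ Uc i → y ∈ Uc j → Commute x y :=
    fun i j hij => fun x y hx hy => hcomm hij x y (hUcS _ hx) (hUcS _ hy)
  have hindU : iSupIndep Uc := fun i =>
    Disjoint.mono (hUcS i) (iSup₂_mono fun j _ => hUcS j) (hind i)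
  have cardSc : ∀ i, Nat.card ↥(Sc i) = Nat.card ↥S := fun i => card_conjSub _ _
  have cardUc : ∀ i, Nat.card ↥(Uc i) = Nat.card ↥U := fun i => card_conjSub _ _
  have cardL : Nat.card ↥L = Nat.card ↥S ^ n := by
    rw [hLeq, card_iSup_of_comm_indep hcomm hind]
    simp [cardSc, Finset.prod_const]
  have cardV : Nat.card ↥(⨆ i, Uc i) = Nat.card ↥U ^ n := by
    rw [card_iSup_of_comm_indep hcommU hindU]
    simp [cardUc, Finset.prod_const]
  have hVL : (⨆ i, Uc i) ≤ L := iSup_le fun i => (hUcS i).trans (hScL i)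
  have cardVsub : Nat.card ↥((⨆ i, Uc i).subgroupOf L) = Nat.card ↥U ^ n := by
    rw [Nat.card_congr (Subgroup.subgroupOfEquivOfLe hVL).toEquiv, cardV]
  have cardUsub : Nat.card ↥(U.subgroupOf S) = Nat.card ↥U :=
    Nat.card_congr (Subgroup.subgroupOfEquivOfLe hUS).toEquiv
  have hk : (U.subgroupOf S).index * Nat.card ↥U = Nat.card ↥S := by
    rw [← cardUsub]; exact Subgroup.index_mul_card _
  have hupos : 0 < Nat.card ↥U := Nat.card_pos
  have hmain : ((⨆ i, Uc i).subgroupOf L).index * Nat.card ↥U ^ n = Nat.card ↥S ^ n := by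
    rw [← cardL, ← cardVsub]; exact Subgroup.index_mul_card _
  have hidx : ((⨆ i, Uc i).subgroupOf L).index = (U.subgroupOf S).index ^ n := by
    have h2 : (U.subgroupOf S).index ^ n * Nat.card ↥U ^ n = Nat.card ↥S ^ n := by
      rw [← mul_pow, hk]
    exact Nat.eq_of_mul_eq_mul_right (pow_pos hupos n) (hmain.trans h2.symm)
  refine ⟨?_, ?_⟩
  · intro p hp hdvd
    rw [cardVsub] at hdvd
    exact hU.1 p hp (cardUsub ▸ hp.dvd_of_dvd_pow hdvd)
  · intro p hp hdvd
    rw [hidx] at hdvd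
    exact hU.2 p hp (hp.dvd_of_dvd_pow hdvd)
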